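/- Let G be a group, let H ≤ G be a subgroup of finite index that is finitely generated and nilpotent, and let ρ : G → ℂˣ be a group homomorphism whose restriction to H is nontrivial. Let ℂ_ρ denote the one-dimensional complex representation of G on which each g ∈ G acts by multiplication by ρ(g). Then the first group cohomology H¹(G, ℂ_ρ) vanishes. -/

import Mathlib

open CategoryTheory

/-- The one-dimensional complex representation of `G` on which `g` acts by
multiplication by `ρ g`. -/
noncomputable def oneDimRep (G : Type) [Group G] (ρ : G →* ℂˣ) : Representation ℂ G ℂ where
  toFun g := (ρ g : ℂ) • LinearMap.id
  map_one' := by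
    simp only [map_one, Units.val_one, one_smul]
    rfl
  map_mul' g h := by
    refine LinearMap.ext fun x => ?_
    simp only [map_mul, Units.val_mul, LinearMap.smul_apply, LinearMap.id_coe, id_eq,
      Module.End.mul_apply, smul_eq_mul]
    ring

/-- Every 1-cocycle for a nontrivial 1-dimensional complex character of a nilpotent group
is a coboundary.  Induction on the nilpotency class. -/
theorem nilpotent_cocycle_principal (n : ℕ) :
    ∀ (H : Type) [Group H] [Group.IsNilpotent H], Group.nilpotencyClass H ≤ n →
    ∀ (ρ : H →* ℂˣ), (∃ h : H, ρ h ≠ 1) →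
    ∀ (f : H → ℂ), (∀ a b, f (a * b) = f a + (ρ a : ℂ) * f b) →
    ∃ x : ℂ, ∀ h, f h = (ρ h : ℂ) * x - x := by
  induction n with
  | zero =>
    intro H _ _ hcl ρ hnt f hf
    obtain ⟨h0, hh0⟩ := hnt
    rw [Nat.le_zero, nilpotencyClass_zero_iff_subsingleton] at hcl
    exact absurd (Subsingleton.elim h0 1 ▸ map_one ρ) hh0
  | succ n ih =>
    intro H _ _ hcl ρ hnt f hf
    obtain ⟨h0, hh0⟩ := hnt
    by_cases hz : ∀ z ∈ Subgroup.center H, ρ z = 1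
    · -- character trivial on the center: descend to `H ⧸ center H`
      have hρh0 : (ρ h0 : ℂ) ≠ 1 := fun h => hh0 (Units.ext h)
      -- f vanishes on the center
      have hfz : ∀ z ∈ Subgroup.center H, f z = 0 := by
        intro z hzc
        have h1 : f (h0 * z) = f h0 + (ρ h0 : ℂ) * f z := hf h0 z
        have h2 : f (z * h0) = f z + (ρ z : ℂ) * f h0 := hf z h0
        rw [(Subgroup.mem_center_iff.1 hzc) h0] at h1
        have hz1 : (ρ z : ℂ) = 1 := by rw [hz z hzc, Units.val_one]
        have key : f h0 + (ρ h0 : ℂ) * f z = f z + f h0 := by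
          linear_combination h1.symm.trans h2 + f h0 * hz1
        have h3 : ((ρ h0 : ℂ) - 1) * f z = 0 := by linear_combination key
        rcases mul_eq_zero.1 h3 with h4 | h4
        · exact absurd (by linear_combination h4) hρh0
        · exact h4
      -- f is constant on cosets of the center
      have hconst : ∀ a b : H, a⁻¹ * b ∈ Subgroup.center H → f a = f b := by
        intro a b hab
        have : b = a * (a⁻¹ * b) := by group
        rw [this, hf, hfz _ hab, mul_zero, add_zero]
      -- descend everything to the quotient
      set Q := H ⧸ Subgroup.center H with hQ
      have hker : Subgroup.center H ≤ ρ.ker := fun z hzc => hz z hzc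
      set ρ' : Q →* ℂˣ := QuotientGroup.lift _ ρ hker with hρ'
      set f' : Q → ℂ := fun q => Quotient.liftOn' q f (fun a b hab => hconst a b
        (QuotientGroup.leftRel_apply.1 hab)) with hf'
      have hf'mk : ∀ a : H, f' (QuotientGroup.mk a) = f a := fun a => rfl
      have hρ'mk : ∀ a : H, ρ' (QuotientGroup.mk a) = ρ a := fun a => rfl
      have hcocycle : ∀ a b : Q, f' (a * b) = f' a + (ρ' a : ℂ) * f' b := by
        intro a b
        induction a using QuotientGroup.induction_on with
        | H a => induction b using QuotientGroup.induction_on with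
          | H b =>
            rw [← QuotientGroup.mk_mul, hf'mk, hf'mk, hf'mk, hρ'mk]
            exact hf a b
      have hnontriv : Subsingleton H → False := by
        intro hs
        exact hh0 (Subsingleton.elim h0 1 ▸ map_one ρ)
      have hclQ : Group.nilpotencyClass Q ≤ n := by
        have h1 : Group.nilpotencyClass Q = Group.nilpotencyClass H - 1 :=
          nilpotencyClass_quotient_center
        have h2 : 1 ≤ Group.nilpotencyClass H := by
          by_contra hc
          push_neg at hc
          rw [Nat.lt_one_iff, nilpotencyClass_zero_iff_subsingleton] at hc
          exact hnontriv hc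
        omega
      obtain ⟨x, hx⟩ := ih Q hclQ ρ' ⟨QuotientGroup.mk h0, by rwa [hρ'mk]⟩ f' hcocycle
      exact ⟨x, fun h => by rw [← hf'mk, hx, hρ'mk]⟩
    · -- character nontrivial on the center: direct computation
      push_neg at hz
      obtain ⟨z, hzc, hzρ⟩ := hz
      have hzρ' : (ρ z : ℂ) ≠ 1 := fun h => hzρ (Units.ext h)
      refine ⟨f z / ((ρ z : ℂ) - 1), fun h => ?_⟩
      have h1 : f (h * z) = f h + (ρ h : ℂ) * f z := hf h z
      have h2 : f (z * h) = f z + (ρ z : ℂ) * f h := hf z h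
      rw [(Subgroup.mem_center_iff.1 hzc) h] at h1
      have key : f h + (ρ h : ℂ) * f z = f z + (ρ z : ℂ) * f h := h1.symm.trans h2
      have hne : (ρ z : ℂ) - 1 ≠ 0 := sub_ne_zero.2 hzρ'
      have key2 : f h * ((ρ z : ℂ) - 1) = f z * ((ρ h : ℂ) - 1) := by linear_combination -key
      field_simp
      linear_combination key2

/-- If `H ≤ G` is a finite-index subgroup which is finitely generated and nilpotent, and
`ρ : G → ℂˣ` is a homomorphism whose restriction to `H` is nontrivial, then the first
group cohomology of `G` with coefficients in the one-dimensional representation `ℂ_ρ`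
vanishes. -/
theorem groupCohomology_one_eq_zero (G : Type) [Group G] (H : Subgroup G)
    [H.FiniteIndex] [Group.FG H] [Group.IsNilpotent H]
    (ρ : G →* ℂˣ) (hρ : ∃ h ∈ H, ρ h ≠ 1) :
    Limits.IsZero (groupCohomology (Rep.of (oneDimRep G ρ)) 1) := by
  set A : Rep ℂ G := Rep.of (oneDimRep G ρ) with hA
  have hact : ∀ (g : G) (x : ℂ), A.ρ g x = (ρ g : ℂ) * x := fun g x => rfl
  -- every cocycle is a coboundary
  have key : ∀ f : groupCohomology.cocycles₁ A, ⇑f ∈ groupCohomology.coboundaries₁ A := by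
    intro f
    suffices hsuff : ∃ x : ℂ, ∀ g : G, A.ρ g x - x = f g by
      obtain ⟨x, hx⟩ := hsuff
      exact ⟨x, funext hx⟩
    let F : G → ℂ := ⇑f
    have hFeq : ∀ g : G, F g = f g := fun _ => rfl
    have hcoc : ∀ a b : G, F (a * b) = F a + (ρ a : ℂ) * F b := by
      intro a b
      have h := (groupCohomology.mem_cocycles₁_iff (A := A) ⇑f).1 f.2 a b
      rw [hact] at h
      have h' : F (a * b) = (ρ a : ℂ) * F b + F a := h
      rw [h']; ring
    -- restriction to H is a cocycle for ρ ∘ incl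
    obtain ⟨h0, hh0, hρh0⟩ := hρ
    obtain ⟨x, hx⟩ := nilpotent_cocycle_principal (Group.nilpotencyClass H) H le_rfl
      (ρ.comp H.subtype) ⟨⟨h0, hh0⟩, hρh0⟩ (fun h : H => F (h : G))
      (fun a b => hcoc a b)
    -- subtract the coboundary; F' vanishes on H
    set F' : G → ℂ := fun g => F g - ((ρ g : ℂ) * x - x) with hF'
    have hF'coc : ∀ a b : G, F' (a * b) = F' a + (ρ a : ℂ) * F' b := by
      intro a b
      simp only [hF', hcoc a b, map_mul, Units.val_mul]
      ring
    have hF'H : ∀ h : G, h ∈ H → F' h = 0 := by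
      intro h hh
      have := hx ⟨h, hh⟩
      simp only [hF', MonoidHom.comp_apply, Subgroup.coe_subtype] at this ⊢
      rw [this]
      ring
    -- average over the finite quotient G ⧸ H
    haveI : Finite (G ⧸ H) := H.finite_quotient_of_finiteIndex
    haveI : Fintype (G ⧸ H) := Fintype.ofFinite _
    set S : ℂ := ∑ q : G ⧸ H, F' q.out with hS
    have hcard : (Fintype.card (G ⧸ H) : ℂ) ≠ 0 := by
      exact_mod_cast Fintype.card_ne_zero
    have hkey : ∀ g : G, (Fintype.card (G ⧸ H) : ℂ) * F' g + (ρ g : ℂ) * S = S := by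
      intro g
      have step : ∀ q : G ⧸ H, F' (g * q.out) = F' ((g • q).out) := by
        intro q
        have hmem : ((g • q).out)⁻¹ * (g * q.out) ∈ H := by
          rw [← QuotientGroup.eq]
          rw [QuotientGroup.out_eq']
          show g • q = QuotientGroup.mk (g • q.out)
          rw [← MulAction.Quotient.smul_mk, QuotientGroup.out_eq']
        have hdecomp : g * q.out = (g • q).out * (((g • q).out)⁻¹ * (g * q.out)) := by
          group
        rw [hdecomp, hF'coc, hF'H _ hmem, mul_zero, add_zero]
      calc (Fintype.card (G ⧸ H) : ℂ) * F' g + (ρ g : ℂ) * S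
          = ∑ q : G ⧸ H, (F' g + (ρ g : ℂ) * F' q.out) := by
            rw [Finset.sum_add_distrib, Finset.sum_const, Finset.card_univ, hS,
              Finset.mul_sum]
            simp [nsmul_eq_mul]
        _ = ∑ q : G ⧸ H, F' (g * q.out) := by
            exact Finset.sum_congr rfl fun q _ => (hF'coc g q.out).symm
        _ = ∑ q : G ⧸ H, F' ((g • q).out) := Finset.sum_congr rfl fun q _ => step q
        _ = S := by
            rw [hS]
            exact Fintype.sum_equiv (MulAction.toPerm g) _ _ (fun q => rfl)
    refine ⟨x - S / (Fintype.card (G ⧸ H) : ℂ), fun g => ?_⟩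
    have hg := hkey g
    have hFg : F' g = F g - ((ρ g : ℂ) * x - x) := rfl
    show (ρ g : ℂ) * (x - S / (Fintype.card (G ⧸ H) : ℂ)) -
      (x - S / (Fintype.card (G ⧸ H) : ℂ)) = F g
    field_simp
    linear_combination (Fintype.card (G ⧸ H) : ℂ) * hFg - hg
  -- conclude using the isomorphism with H¹
  have hz : ∀ y : groupCohomology.H1 A, y = 0 := fun y =>
    groupCohomology.H1_induction_on y fun x => (groupCohomology.H1π_eq_zero_iff x).2 (key x)
  haveI : Subsingleton (groupCohomology.H1 A) := ⟨fun a b => (hz a).trans (hz b).symm⟩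
  exact ModuleCat.isZero_of_subsingleton (groupCohomology.H1 A)
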